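/- Let T² act on ℂ⁴ by ((s,t), z) ↦ (s^m t z₁, t z₂, s z₃, s z₄) with |s| = |t| = 1 for a fixed positive integer m, and let μ(z) = ½(m|z₁|² + |z₃|² + |z₄|², |z₁|² + |z₂|²). Then for real r with r ≠ 0 and r ≠ m, the point (r, 1) is a regular value of μ: at every z ∈ μ^{-1}(r,1), the differential dμ_z : ℂ⁴ → ℝ² is surjective. -/

import Mathlib

noncomputable def mu13 (m : ℕ) (z : Fin 4 → ℂ) : ℝ × ℝ :=
  ((1 / 2 : ℝ) * ((m : ℝ) * ‖z 0‖ ^ 2 + ‖z 2‖ ^ 2 + ‖z 3‖ ^ 2),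
   (1 / 2 : ℝ) * (‖z 0‖ ^ 2 + ‖z 1‖ ^ 2))

open ContinuousLinearMap in
noncomputable def Dsq (z : Fin 4 → ℂ) (i : Fin 4) : (Fin 4 → ℂ) →L[ℝ] ℝ :=
  (fderivInnerCLM ℝ (z i, z i)).comp ((proj i : (Fin 4 → ℂ) →L[ℝ] ℂ).prod (proj i))

open ContinuousLinearMap in
theorem normsq_deriv (z : Fin 4 → ℂ) (i : Fin 4) :
    HasFDerivAt (fun z : Fin 4 → ℂ => ‖z i‖^2) (Dsq z i) z := by
  have h := (HasFDerivAt.inner ℝ ((proj i : (Fin 4 → ℂ) →L[ℝ] ℂ).hasFDerivAt (x := z))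
    ((proj i : (Fin 4 → ℂ) →L[ℝ] ℂ).hasFDerivAt (x := z)))
  simp only [ContinuousLinearMap.proj_apply] at h
  exact h.congr_of_eventuallyEq (Filter.Eventually.of_forall fun w => (real_inner_self_eq_norm_sq (w i)).symm)

theorem Dsq_apply (z w : Fin 4 → ℂ) (i : Fin 4) :
    Dsq z i w = 2 * (inner ℝ (z i) (w i) : ℝ) := by
  simp [Dsq, fderivInnerCLM_apply, real_inner_comm]
  ring

theorem Dsq_single_self (z : Fin 4 → ℂ) (i : Fin 4) :
    Dsq z i (Pi.single i (z i)) = 2 * ‖z i‖^2 := by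
  rw [Dsq_apply]; simp [real_inner_self_eq_norm_sq]

theorem Dsq_single_ne (z : Fin 4 → ℂ) (i j : Fin 4) (h : i ≠ j) :
    Dsq z i (Pi.single j (z j)) = 0 := by
  rw [Dsq_apply, Pi.single_eq_of_ne h]; simp

noncomputable def Dmu (m : ℕ) (z : Fin 4 → ℂ) : (Fin 4 → ℂ) →L[ℝ] ℝ × ℝ :=
  ((1/2 : ℝ) • ((m : ℝ) • Dsq z 0 + Dsq z 2 + Dsq z 3)).prod
    ((1/2 : ℝ) • (Dsq z 0 + Dsq z 1))

theorem mu13_deriv (m : ℕ) (z : Fin 4 → ℂ) : HasFDerivAt (mu13 m) (Dmu m z) z := by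
  have h0 := normsq_deriv z 0
  have h1 := normsq_deriv z 1
  have h2 := normsq_deriv z 2
  have h3 := normsq_deriv z 3
  have hA : HasFDerivAt (fun z : Fin 4 → ℂ => (1/2 : ℝ) * ((m : ℝ) * ‖z 0‖^2 + ‖z 2‖^2 + ‖z 3‖^2))
      ((1/2 : ℝ) • ((m : ℝ) • Dsq z 0 + Dsq z 2 + Dsq z 3)) z := by
    exact (((h0.const_smul ((m:ℝ))).add h2).add h3).const_smul ((1/2:ℝ))
      |>.congr_of_eventuallyEq (Filter.Eventually.of_forall fun w => by simp [smul_eq_mul])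
  have hB : HasFDerivAt (fun z : Fin 4 → ℂ => (1/2 : ℝ) * (‖z 0‖^2 + ‖z 1‖^2))
      ((1/2 : ℝ) • (Dsq z 0 + Dsq z 1)) z := by
    exact (h0.add h1).const_smul ((1/2:ℝ)) |>.congr_of_eventuallyEq
      (Filter.Eventually.of_forall fun w => by simp [smul_eq_mul])
  exact HasFDerivAt.prodMk hA hB

theorem surj_of_det (L : (Fin 4 → ℂ) →L[ℝ] ℝ × ℝ) (u v : Fin 4 → ℂ)
    (h : (L u).1 * (L v).2 - (L u).2 * (L v).1 ≠ 0) : Function.Surjective L := by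
  intro p
  set d := (L u).1 * (L v).2 - (L u).2 * (L v).1
  refine ⟨((p.1 * (L v).2 - p.2 * (L v).1)/d) • u + ((p.2 * (L u).1 - p.1 * (L u).2)/d) • v, ?_⟩
  rw [map_add, map_smul, map_smul]
  ext <;> simp [Prod.smul_fst, Prod.smul_snd, smul_eq_mul] <;> field_simp <;> ring

theorem stmt_13 (m : ℕ) (hm : 0 < m) (r : ℝ) (hr0 : r ≠ 0) (hrm : r ≠ (m : ℝ))
    (z : Fin 4 → ℂ) (hz : mu13 m z = (r, 1)) :
    Function.Surjective (fderiv ℝ (mu13 m) z) := by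
  rw [(mu13_deriv m z).fderiv]
  have hz1 : (1/2 : ℝ) * ((m : ℝ) * ‖z 0‖^2 + ‖z 2‖^2 + ‖z 3‖^2) = r := congrArg Prod.fst hz
  have hz2 : (1/2 : ℝ) * (‖z 0‖^2 + ‖z 1‖^2) = 1 := congrArg Prod.snd hz
  -- values of Dmu on singles
  have Dval : ∀ j : Fin 4, Dmu m z (Pi.single j (z j)) =
      ((1/2) * ((m:ℝ) * Dsq z 0 (Pi.single j (z j)) + Dsq z 2 (Pi.single j (z j)) + Dsq z 3 (Pi.single j (z j))),
       (1/2) * (Dsq z 0 (Pi.single j (z j)) + Dsq z 1 (Pi.single j (z j)))) := by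
    intro j; simp [Dmu, smul_eq_mul]; exact ⟨by ring, by ring⟩
  have e0 : Dmu m z (Pi.single 0 (z 0)) = ((m:ℝ) * ‖z 0‖^2, ‖z 0‖^2) := by
    rw [Dval]; rw [Dsq_single_self, Dsq_single_ne z 1 0 (by decide), Dsq_single_ne z 2 0 (by decide),
      Dsq_single_ne z 3 0 (by decide)]; simp only [Prod.mk.injEq]; constructor <;> ring
  have e1 : Dmu m z (Pi.single 1 (z 1)) = (0, ‖z 1‖^2) := by
    rw [Dval]; rw [Dsq_single_self, Dsq_single_ne z 0 1 (by decide), Dsq_single_ne z 2 1 (by decide),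
      Dsq_single_ne z 3 1 (by decide)]; simp only [Prod.mk.injEq]; constructor <;> ring
  have e2 : Dmu m z (Pi.single 2 (z 2)) = (‖z 2‖^2, 0) := by
    rw [Dval]; rw [Dsq_single_self, Dsq_single_ne z 0 2 (by decide), Dsq_single_ne z 1 2 (by decide),
      Dsq_single_ne z 3 2 (by decide)]; simp only [Prod.mk.injEq]; constructor <;> ring
  have e3 : Dmu m z (Pi.single 3 (z 3)) = (‖z 3‖^2, 0) := by
    rw [Dval]; rw [Dsq_single_self, Dsq_single_ne z 0 3 (by decide), Dsq_single_ne z 1 3 (by decide),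
      Dsq_single_ne z 2 3 (by decide)]; simp only [Prod.mk.injEq]; constructor <;> ring
  by_cases h2 : z 2 = 0
  · by_cases h3 : z 3 = 0
    · -- z2 = z3 = 0 : m‖z0‖² = 2r so z0 ≠ 0 ; z1 ≠ 0 since else r = m
      have n2 : ‖z 2‖ = 0 := by simp [h2]
      have n3 : ‖z 3‖ = 0 := by simp [h3]
      have hz0 : (m : ℝ) * ‖z 0‖^2 = 2 * r := by rw [n2, n3] at hz1; nlinarith [hz1]
      have h0 : ‖z 0‖^2 ≠ 0 := by
        intro h; apply hr0; rw [h] at hz0; linarith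
      have h1 : ‖z 1‖^2 ≠ 0 := by
        intro h; rw [h] at hz2
        have : ‖z 0‖^2 = 2 := by linarith
        rw [this] at hz0
        exact hrm (by linarith)
      apply surj_of_det _ (Pi.single 0 (z 0)) (Pi.single 1 (z 1))
      rw [e0, e1]
      simp only
      have hmm : (m:ℝ) ≠ 0 := Nat.cast_ne_zero.mpr hm.ne'
      intro h; apply hmm
      rcases mul_eq_zero.mp (by linarith [h] : (m:ℝ) * (‖z 0‖^2 * ‖z 1‖^2) = 0) with h' | h'
      · exact h'
      · rcases mul_eq_zero.mp h' with h'' | h'' <;> [exact absurd h'' h0; exact absurd h'' h1]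
    · -- z3 ≠ 0; z0 or z1 nonzero since sum = 2
      have h3' : ‖z 3‖^2 ≠ 0 := pow_ne_zero _ (norm_ne_zero_iff.mpr h3)
      by_cases h0 : ‖z 0‖^2 = 0
      · have h1 : ‖z 1‖^2 ≠ 0 := by intro h; rw [h0, h] at hz2; norm_num at hz2
        apply surj_of_det _ (Pi.single 3 (z 3)) (Pi.single 1 (z 1))
        rw [e3, e1]; simp only
        intro h; rcases mul_eq_zero.mp (by linarith : ‖z 3‖^2 * ‖z 1‖^2 = 0) with h' | h'
        exacts [h3' h', h1 h']
      · apply surj_of_det _ (Pi.single 3 (z 3)) (Pi.single 0 (z 0))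
        rw [e3, e0]; simp only
        intro h; rcases mul_eq_zero.mp (by linarith : ‖z 3‖^2 * ‖z 0‖^2 = 0) with h' | h'
        exacts [h3' h', h0 h']
  · have h2' : ‖z 2‖^2 ≠ 0 := pow_ne_zero _ (norm_ne_zero_iff.mpr h2)
    by_cases h0 : ‖z 0‖^2 = 0
    · have h1 : ‖z 1‖^2 ≠ 0 := by intro h; rw [h0, h] at hz2; norm_num at hz2
      apply surj_of_det _ (Pi.single 2 (z 2)) (Pi.single 1 (z 1))
      rw [e2, e1]; simp only
      intro h; rcases mul_eq_zero.mp (by linarith : ‖z 2‖^2 * ‖z 1‖^2 = 0) with h' | h'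
      exacts [h2' h', h1 h']
    · apply surj_of_det _ (Pi.single 2 (z 2)) (Pi.single 0 (z 0))
      rw [e2, e0]; simp only
      intro h; rcases mul_eq_zero.mp (by linarith : ‖z 2‖^2 * ‖z 0‖^2 = 0) with h' | h'
      exacts [h2' h', h0 h']
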